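/- The exponential generating function ∑_{n≥0} A_n z^n/n! of the zigzag numbers satisfies ∑_{n≥0} A_n z^n/n! = (1 + sin z)/cos z, where A_n = J_{n+1}(-1) with J the Mallows–Riordan polynomials. -/

import Mathlib

open Polynomial MeasureTheory

/-- Mallows–Riordan polynomials `J n`, via the Kreweras recursion
`J (n+2) = ∑_{i=0}^n C(n,i) (1+θ+⋯+θ^i) J (i+1) J (n+1-i)`, `J 1 = 1`. -/
noncomputable def MRJ : ℕ → Polynomial ℚ
  | 0 => 0
  | 1 => 1
  | n + 2 =>
      ∑ i ∈ (Finset.range (n + 1)).attach,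
        (n.choose i.1 : Polynomial ℚ) * (∑ j ∈ Finset.range (i.1 + 1), X ^ j) *
          MRJ (i.1 + 1) * MRJ (n + 1 - i.1)
  decreasing_by
  · have := Finset.mem_range.mp i.2; omega
  · omega

/-- Euler zigzag numbers, as the Taylor coefficients at `0` of `sec z + tan z`. -/
noncomputable def zigzag (n : ℕ) : ℝ :=
  iteratedDeriv n (fun z : ℝ => (1 + Real.sin z) / Real.cos z) 0

noncomputable def Fc : ℂ → ℂ := fun z => (1 + Complex.sin z) / Complex.cos z

def Sc : Set ℂ := {z | Complex.cos z ≠ 0}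

lemma isOpen_Sc : IsOpen Sc := isOpen_ne.preimage Complex.continuous_cos

lemma zero_mem_Sc : (0 : ℂ) ∈ Sc := by simp [Sc]

lemma analyticOnNhd_Fc : AnalyticOnNhd ℂ Fc Sc :=
  DifferentiableOn.analyticOnNhd
    (fun z hz => (((differentiableAt_const 1).add (Complex.differentiable_sin z)).div
      (Complex.differentiable_cos z) hz).differentiableWithinAt) isOpen_Sc

lemma itdW_eq {s : Set ℂ} (hs : IsOpen s) {x : ℂ} (hx : x ∈ s) (f : ℂ → ℂ) (n : ℕ) :
    iteratedDerivWithin n f s x = iteratedDeriv n f x := by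
  rw [iteratedDerivWithin_eq_iteratedFDerivWithin, iteratedFDerivWithin_of_isOpen n hs hx,
    iteratedDeriv_eq_iteratedFDeriv]

lemma itd_add {s : Set ℂ} (hs : IsOpen s) (n : ℕ) {f g : ℂ → ℂ}
    (hf : AnalyticOnNhd ℂ f s) (hg : AnalyticOnNhd ℂ g s) {x : ℂ} (hx : x ∈ s) :
    iteratedDeriv n (fun z => f z + g z) x = iteratedDeriv n f x + iteratedDeriv n g x := by
  rw [← itdW_eq hs hx, ← itdW_eq hs hx, ← itdW_eq hs hx]
  exact iteratedDerivWithin_add hx hs.uniqueDiffOn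
    (hf.contDiffOn hs.uniqueDiffOn x hx) (hg.contDiffOn hs.uniqueDiffOn x hx)

lemma itd_const_mul {s : Set ℂ} (hs : IsOpen s) (n : ℕ) (c : ℂ) {f : ℂ → ℂ}
    (hf : AnalyticOnNhd ℂ f s) {x : ℂ} (hx : x ∈ s) :
    iteratedDeriv n (fun z => c * f z) x = c * iteratedDeriv n f x := by
  rw [← itdW_eq hs hx, ← itdW_eq hs hx]
  exact iteratedDerivWithin_const_mul hx hs.uniqueDiffOn c (hf.contDiffOn hs.uniqueDiffOn x hx)

lemma itd_const (n : ℕ) (c : ℂ) (x : ℂ) :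
    iteratedDeriv n (fun _ => c) x = if n = 0 then c else 0 := by
  induction n generalizing c x with
  | zero => simp
  | succ n ih =>
    rw [iteratedDeriv_succ']
    simp only [deriv_const']
    simpa using ih 0 x

lemma AnalyticOnNhd.itd {s : Set ℂ} (n : ℕ) {f : ℂ → ℂ} (hf : AnalyticOnNhd ℂ f s) :
    AnalyticOnNhd ℂ (iteratedDeriv n f) s := by
  induction n generalizing f with
  | zero => simpa [iteratedDeriv_zero]
  | succ n ih =>
    rw [iteratedDeriv_succ']
    exact ih hf.deriv

lemma itd_leibniz {s : Set ℂ} (hs : IsOpen s) :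
    ∀ (n : ℕ) (f g : ℂ → ℂ), AnalyticOnNhd ℂ f s → AnalyticOnNhd ℂ g s → ∀ x ∈ s,
    iteratedDeriv n (fun z => f z * g z) x =
      ∑ i ∈ Finset.range (n + 1),
        (n.choose i : ℂ) * (iteratedDeriv i f x * iteratedDeriv (n - i) g x) := by
  intro n
  induction n with
  | zero => intro f g hf hg x hx; simp
  | succ n ih =>
    intro f g hf hg x hx
    have hEq : Set.EqOn (deriv fun z => f z * g z)
        (fun z => deriv f z * g z + f z * deriv g z) s := fun z hz =>
      deriv_mul ((hf z hz).differentiableAt) ((hg z hz).differentiableAt)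
    rw [iteratedDeriv_succ', hEq.iteratedDeriv_of_isOpen hs n hx,
      itd_add hs n (hf.deriv.mul hg) (hf.mul hg.deriv) hx,
      ih (deriv f) g hf.deriv hg x hx, ih f (deriv g) hf hg.deriv x hx]
    have h1 : ∀ i, iteratedDeriv i (deriv f) x = iteratedDeriv (i + 1) f x := fun i =>
      (congrFun (iteratedDeriv_succ' (n := i) (f := f)) x).symm
    have h2 : ∀ i, iteratedDeriv i (deriv g) x = iteratedDeriv (i + 1) g x := fun i =>
      (congrFun (iteratedDeriv_succ' (n := i) (f := g)) x).symm
    rw [Finset.sum_choose_succ_mul (fun i j => iteratedDeriv i f x * iteratedDeriv j g x) n]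
    rw [add_comm]
    congr 1
    · refine Finset.sum_congr rfl fun i hi => ?_
      have hi' := Finset.mem_range.mp hi
      rw [h2, Nat.sub_add_comm (by omega)]
    · refine Finset.sum_congr rfl fun i hi => ?_
      rw [h1]

lemma Fc_deriv : Set.EqOn (deriv Fc) (fun z => (1 + Fc z * Fc z) / 2) Sc := by
  intro z hz
  have hz' : Complex.cos z ≠ 0 := hz
  have hd : HasDerivAt Fc
      ((Complex.cos z * Complex.cos z - (1 + Complex.sin z) * -Complex.sin z) /
        Complex.cos z ^ 2) z :=
    ((Complex.hasDerivAt_sin z).const_add 1).div (Complex.hasDerivAt_cos z) hz'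
  rw [hd.deriv]
  have hsc := Complex.sin_sq_add_cos_sq z
  simp only [Fc]
  field_simp
  ring_nf
  linear_combination hsc

lemma Fc_mul_neg : Set.EqOn (fun z => Fc z * Fc (-z)) (fun _ => (1 : ℂ)) Sc := by
  intro z hz
  have hz' : Complex.cos z ≠ 0 := hz
  have hsc := Complex.sin_sq_add_cos_sq z
  simp only [Fc, Complex.sin_neg, Complex.cos_neg]
  field_simp
  linear_combination -hsc

noncomputable def cz (n : ℕ) : ℂ := iteratedDeriv n Fc 0

lemma cz_zero : cz 0 = 1 := by simp [cz, Fc]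

lemma analyticOnNhd_constC (a : ℂ) : AnalyticOnNhd ℂ (fun _ : ℂ => a) Sc := analyticOnNhd_const

lemma analyticOnNhd_Fc_neg : AnalyticOnNhd ℂ (fun z => Fc (-z)) Sc :=
  analyticOnNhd_Fc.comp (analyticOnNhd_id.neg)
    (fun z hz => by simpa [Sc, Complex.cos_neg] using hz)

lemma two_cz_succ (n : ℕ) :
    2 * cz (n + 1) =
      (if n = 0 then 1 else 0) +
        ∑ i ∈ Finset.range (n + 1), (n.choose i : ℂ) * (cz i * cz (n - i)) := by
  have hEq : Set.EqOn (deriv Fc) (fun z => (2 : ℂ)⁻¹ * (1 + Fc z * Fc z)) Sc := fun z hz => by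
    rw [Fc_deriv hz]; ring
  have hB : AnalyticOnNhd ℂ (fun z => Fc z * Fc z) Sc := analyticOnNhd_Fc.mul analyticOnNhd_Fc
  have hA : AnalyticOnNhd ℂ (fun z => 1 + Fc z * Fc z) Sc := (analyticOnNhd_constC 1).add hB
  simp only [cz]
  rw [iteratedDeriv_succ', hEq.iteratedDeriv_of_isOpen isOpen_Sc n zero_mem_Sc,
    itd_const_mul isOpen_Sc n _ hA zero_mem_Sc,
    itd_add isOpen_Sc n (analyticOnNhd_constC 1) hB zero_mem_Sc,
    itd_const n 1 0, itd_leibniz isOpen_Sc n Fc Fc analyticOnNhd_Fc analyticOnNhd_Fc 0 zero_mem_Sc]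
  ring

lemma cz_alt (n : ℕ) :
    ∑ i ∈ Finset.range (n + 1), (n.choose i : ℂ) * (cz i * ((-1) ^ (n - i) * cz (n - i))) =
      if n = 0 then 1 else 0 := by
  have h1 : iteratedDeriv n (fun z => Fc z * Fc (-z)) 0 = iteratedDeriv n (fun _ : ℂ => (1 : ℂ)) 0 :=
    Fc_mul_neg.iteratedDeriv_of_isOpen isOpen_Sc n zero_mem_Sc
  rw [itd_leibniz isOpen_Sc n Fc (fun z => Fc (-z)) analyticOnNhd_Fc analyticOnNhd_Fc_neg 0
    zero_mem_Sc, itd_const n 1 (0:ℂ)] at h1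
  rw [← h1]
  refine Finset.sum_congr rfl fun i hi => ?_
  rw [iteratedDeriv_comp_neg (n - i) Fc 0, neg_zero, smul_eq_mul]
  rfl

lemma cz_rec (n : ℕ) :
    cz (n + 1) = ∑ i ∈ Finset.range (n + 1),
      (if Even i then 1 else 0 : ℂ) * (n.choose i) * (cz i * cz (n - i)) := by
  have key : 2 * cz (n + 1) = ∑ i ∈ Finset.range (n + 1),
      ((1 + (-1) ^ (n - i)) * ((n.choose i : ℂ))) * (cz i * cz (n - i)) := by
    rw [two_cz_succ n, ← cz_alt n, ← Finset.sum_add_distrib]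
    exact Finset.sum_congr rfl fun i _ => by ring
  have hrefl : ∑ i ∈ Finset.range (n + 1),
      ((1 + (-1) ^ (n - i)) * ((n.choose i : ℂ))) * (cz i * cz (n - i))
      = ∑ i ∈ Finset.range (n + 1),
      ((1 + (-1) ^ i) * ((n.choose i : ℂ))) * (cz i * cz (n - i)) := by
    rw [← Finset.sum_range_reflect]
    refine Finset.sum_congr rfl fun i hi => ?_
    have hi' := Finset.mem_range.mp hi
    have h1 : n + 1 - 1 - i = n - i := by omega
    have h2 : n - (n - i) = i := by omega
    rw [h1, h2, Nat.choose_symm (by omega : i ≤ n)]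
    ring
  refine mul_left_cancel₀ (two_ne_zero' ℂ) ?_
  rw [key, hrefl, Finset.mul_sum]
  refine Finset.sum_congr rfl fun i _ => ?_
  rcases Nat.even_or_odd i with h | h
  · rw [h.neg_one_pow, if_pos h]; ring
  · rw [h.neg_one_pow, if_neg (Nat.not_even_iff_odd.mpr h)]; ring

noncomputable def bq (n : ℕ) : ℚ := (MRJ (n + 1)).eval (-1)

lemma bq_zero : bq 0 = 1 := by
  rw [bq, MRJ]
  simp

lemma bq_succ (n : ℕ) :
    bq (n + 1) = ∑ i ∈ Finset.range (n + 1),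
      (if Even i then 1 else 0 : ℚ) * (n.choose i) * (bq i * bq (n - i)) := by
  have h : bq (n + 1) = (MRJ (n + 2)).eval (-1) := rfl
  rw [h, MRJ, Finset.sum_attach (Finset.range (n + 1))
    (fun i => (n.choose i : Polynomial ℚ) * (∑ j ∈ Finset.range (i + 1), Polynomial.X ^ j) *
      MRJ (i + 1) * MRJ (n + 1 - i)), Polynomial.eval_finset_sum]
  refine Finset.sum_congr rfl fun i hi => ?_
  have hi' := Finset.mem_range.mp hi
  have hgeom : (∑ j ∈ Finset.range (i + 1), Polynomial.X ^ j : Polynomial ℚ).eval (-1)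
      = if Even i then 1 else 0 := by
    rw [Polynomial.eval_finset_sum]
    simp only [Polynomial.eval_pow, Polynomial.eval_X]
    rw [neg_one_geom_sum]
    rcases Nat.even_or_odd i with h | h
    · rw [if_neg, if_pos h]
      simpa [Nat.even_add_one] using h
    · rw [if_pos, if_neg (Nat.not_even_iff_odd.mpr h)]
      simpa [Nat.even_add_one] using Nat.not_even_iff_odd.mpr h
  have hsub : n + 1 - i = (n - i) + 1 := by omega
  rw [hsub]
  simp only [Polynomial.eval_mul, Polynomial.eval_natCast, hgeom]
  show _ = _ * _ * (bq i * bq (n - i))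
  rw [bq, bq]
  ring

lemma cz_eq_bq : ∀ n, cz n = (bq n : ℂ) := by
  intro n
  induction n using Nat.strong_induction_on with
  | _ n ih =>
    match n with
    | 0 => rw [cz_zero, bq_zero]; norm_num
    | n + 1 =>
      rw [cz_rec n, bq_succ n]
      push_cast
      refine Finset.sum_congr rfl fun i hi => ?_
      have hi' := Finset.mem_range.mp hi
      rw [ih i (by omega), ih (n - i) (by omega)]
      split_ifs <;> push_cast <;> ring

lemma itd_real (n : ℕ) : ∀ x : ℝ, (x : ℂ) ∈ Sc →
    iteratedDeriv n (fun z : ℝ => (1 + Real.sin z) / Real.cos z) x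
      = (iteratedDeriv n Fc x).re := by
  induction n with
  | zero =>
    intro x hx
    simp only [iteratedDeriv_zero, Fc]
    rw [show ((1 : ℂ) + Complex.sin x) / Complex.cos x
        = (((1 + Real.sin x) / Real.cos x : ℝ) : ℂ) by push_cast; ring]
    rw [Complex.ofReal_re]
  | succ n ih =>
    intro x hx
    have hU : IsOpen {y : ℝ | (y : ℂ) ∈ Sc} := isOpen_Sc.preimage Complex.continuous_ofReal
    have hev : (fun y : ℝ => iteratedDeriv n (fun z : ℝ => (1 + Real.sin z) / Real.cos z) y)
        =ᶠ[nhds x] fun y : ℝ => (iteratedDeriv n Fc y).re := by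
      filter_upwards [hU.mem_nhds hx] with y hy using ih y hy
    rw [iteratedDeriv_succ, hev.deriv_eq]
    have hG : AnalyticOnNhd ℂ (iteratedDeriv n Fc) Sc := analyticOnNhd_Fc.itd n
    have hd : HasDerivAt (iteratedDeriv n Fc) (deriv (iteratedDeriv n Fc) x) x :=
      ((hG _ hx).differentiableAt).hasDerivAt
    rw [hd.real_of_complex.deriv, ← iteratedDeriv_succ]

lemma zigzag_eq_bq (n : ℕ) : zigzag n = (bq n : ℝ) := by
  have h0 : ((0 : ℝ) : ℂ) ∈ Sc := by simpa using zero_mem_Sc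
  have := itd_real n 0 h0
  rw [zigzag, this]
  have : iteratedDeriv n Fc ((0:ℝ):ℂ) = cz n := by rw [cz]; norm_num
  rw [this, cz_eq_bq n]
  simp

lemma cz_eq_ofReal (n : ℕ) : cz n = ((zigzag n : ℝ) : ℂ) := by
  rw [zigzag_eq_bq, cz_eq_bq n]
  push_cast
  rfl

lemma mem_Sc_of_norm {w : ℂ} (hw : ‖w‖ < Real.pi / 2) : w ∈ Sc := by
  intro h0
  rcases Complex.cos_eq_zero_iff.mp h0 with ⟨k, hk⟩
  rw [hk] at hw
  have h1 : (1 : ℝ) ≤ |((2 * k + 1 : ℤ) : ℝ)| := by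
    rw [← Int.cast_abs]
    exact_mod_cast Int.one_le_abs (by omega)
  have h2 : ‖(2 * (k : ℂ) + 1) * (Real.pi : ℂ) / 2‖ = |((2 * k + 1 : ℤ) : ℝ)| * Real.pi / 2 := by
    rw [show (2 * (k : ℂ) + 1) = (((2 * k + 1 : ℤ) : ℝ) : ℂ) by push_cast; ring]
    rw [norm_div, norm_mul, Complex.norm_real, Complex.norm_real]
    simp [abs_of_pos Real.pi_pos]
  rw [h2] at hw
  nlinarith [Real.pi_pos]

theorem zigzag_egf_sec_add_tan :
    (∀ z : ℝ, |z| < Real.pi / 2 →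
      HasSum (fun n : ℕ => zigzag n * z ^ n / n.factorial)
        ((1 + Real.sin z) / Real.cos z)) ∧
    ∀ n : ℕ, zigzag n = ((MRJ (n + 1)).eval (-1) : ℚ) := by
  constructor
  · intro z hz
    set r : ℝ := (|z| + Real.pi / 2) / 2 with hr_def
    have hr0 : 0 < r := by have := abs_nonneg z; have := Real.pi_pos; positivity
    have hzr : |z| < r := by simp only [hr_def]; linarith
    have hrpi : r < Real.pi / 2 := by simp only [hr_def]; linarith
    set R : NNReal := ⟨r, hr0.le⟩ with hR_def
    have hd : DifferentiableOn ℂ Fc (Metric.closedBall (0 : ℂ) R) := by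
      intro w hw
      have hw' : ‖w‖ < Real.pi / 2 := by
        have := Metric.mem_closedBall.mp hw
        rw [dist_zero_right] at this
        exact lt_of_le_of_lt this hrpi
      exact ((analyticOnNhd_Fc w (mem_Sc_of_norm hw')).differentiableAt).differentiableWithinAt
    have hp : HasFPowerSeriesOnBall Fc (cauchyPowerSeries Fc 0 R) 0 R :=
      hd.hasFPowerSeriesOnBall (by exact_mod_cast hr0)
    have hy : (z : ℂ) ∈ Metric.eball (0 : ℂ) (R : ENNReal) := by
      rw [mem_emetric_ball_zero_iff]
      exact_mod_cast (show ‖(z : ℂ)‖ < r by rwa [Complex.norm_real, Real.norm_eq_abs])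
    have hsum := hp.hasSum_iteratedFDeriv hy
    have hterm : ∀ n : ℕ, ((n.factorial : ℂ))⁻¹ • iteratedFDeriv ℂ n Fc 0 (fun _ => (z : ℂ))
        = ((zigzag n * z ^ n / n.factorial : ℝ) : ℂ) := by
      intro n
      rw [iteratedFDeriv_apply_eq_iteratedDeriv_mul_prod]
      have : iteratedDeriv n Fc 0 = cz n := rfl
      rw [this, cz_eq_ofReal n]
      simp only [Finset.prod_const, Finset.card_univ, Fintype.card_fin, smul_eq_mul]
      push_cast
      field_simp
    rw [zero_add] at hsum
    have hFz : Fc (z : ℂ) = (((1 + Real.sin z) / Real.cos z : ℝ) : ℂ) := by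
      rw [Fc]
      push_cast
      ring
    rw [hFz] at hsum
    have : HasSum (fun n : ℕ => ((zigzag n * z ^ n / n.factorial : ℝ) : ℂ))
        (((1 + Real.sin z) / Real.cos z : ℝ) : ℂ) := by
      refine hsum.congr_fun ?_
      intro n
      rw [← hterm n]
    exact Complex.hasSum_ofReal.mp this
  · intro n
    exact zigzag_eq_bq n
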